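/- For the uncentered outcome influence function term M_j(t) defined with nuisance functions evaluated at their true values, E[M_j(t)] = E[E(Y_t | X, Z = j)]; that is, the weighted residual correction terms have mean zero. -/
import Mathlib


open Finset
open scoped Classical

noncomputable def Pr {Ω : Type*} [Fintype Ω] (p : Ω → ℝ) (A : Ω → Prop) : ℝ :=
  ∑ ω, if A ω then p ω else 0

noncomputable def Ex {Ω : Type*} [Fintype Ω] (p : Ω → ℝ) (f : Ω → ℝ) : ℝ :=
  ∑ ω, p ω * f ω

noncomputable def cexp {Ω : Type*} [Fintype Ω] (p : Ω → ℝ) (f : Ω → ℝ) (A : Ω → Prop) : ℝ :=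
  (∑ ω, if A ω then p ω * f ω else 0) / Pr p A

set_option maxHeartbeats 1000000

section helpers
variable {Ω : Type*} [Fintype Ω]

lemma Pr_congr (p : Ω → ℝ) {E F : Ω → Prop} (h : ∀ ω, E ω ↔ F ω) : Pr p E = Pr p F := by
  unfold Pr
  exact Finset.sum_congr rfl fun ω _ => by simp only [h ω]

lemma sum_ind (p : Ω → ℝ) (B : Ω → ℝ) (hB : ∀ ω, B ω = 0 ∨ B ω = 1) (E : Ω → Prop) :
    (∑ ω, if E ω then p ω * B ω else 0) = Pr p (fun ω => E ω ∧ B ω = 1) := by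
  unfold Pr
  refine Finset.sum_congr rfl fun ω _ => ?_
  rcases hB ω with h | h <;> by_cases hE : E ω <;> simp [h, hE]

lemma Pr_split (p : Ω → ℝ) (B : Ω → ℝ) (hB : ∀ ω, B ω = 0 ∨ B ω = 1) (E : Ω → Prop) :
    Pr p (fun ω => E ω ∧ B ω = 0) + Pr p (fun ω => E ω ∧ B ω = 1) = Pr p E := by
  unfold Pr
  rw [← Finset.sum_add_distrib]
  refine Finset.sum_congr rfl fun ω _ => ?_
  rcases hB ω with h | h <;> by_cases hE : E ω <;> simp [h, hE]

lemma sum_if_eq_Pr (p : Ω → ℝ) (E : Ω → Prop) [inst : ∀ ω, Decidable (E ω)] :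
    (∑ ω, if E ω then p ω else 0) = Pr p E := by
  unfold Pr
  exact Finset.sum_congr rfl fun ω _ => by by_cases h : E ω <;> simp [h]

end helpers

/-- the uncentered outcome influence function term M_j(t), evaluated at the
true nuisance values, has mean E[E(Y_t | X, Z = j)]. -/
theorem M_term_mean {Ω 𝕏 : Type*} [Fintype Ω] [Fintype 𝕏]
    (p : Ω → ℝ) (hp0 : ∀ ω, 0 ≤ p ω) (hp1 : ∑ ω, p ω = 1)
    (X : Ω → 𝕏) (Z A R Y : Ω → ℝ)
    (hZbin : ∀ ω, Z ω = 0 ∨ Z ω = 1) (hAbin : ∀ ω, A ω = 0 ∨ A ω = 1)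
    (hRbin : ∀ ω, R ω = 0 ∨ R ω = 1) (hYbin : ∀ ω, Y ω = 0 ∨ Y ω = 1)
    (j : ℝ) (hj : j = 0 ∨ j = 1)
    -- R ⟂ Y_t | (X, Z, A)
    (hCI : ∀ (x : 𝕏) (a : ℝ), a = 0 ∨ a = 1 →
      Pr p (fun ω => R ω = 1 ∧ Y ω = 1 ∧ X ω = x ∧ Z ω = j ∧ A ω = a) *
          Pr p (fun ω => X ω = x ∧ Z ω = j ∧ A ω = a)
        = Pr p (fun ω => R ω = 1 ∧ X ω = x ∧ Z ω = j ∧ A ω = a) *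
            Pr p (fun ω => Y ω = 1 ∧ X ω = x ∧ Z ω = j ∧ A ω = a))
    -- positivity: δ_j(X) > 0, π_j(X) ∈ (0,1), ω_{j,a}(X) > 0
    (hpos : ∀ x : 𝕏, Pr p (fun ω => X ω = x) > 0 →
      Pr p (fun ω => Z ω = j ∧ X ω = x) > 0 ∧
      (∀ a : ℝ, a = 0 ∨ a = 1 →
        Pr p (fun ω => X ω = x ∧ Z ω = j ∧ A ω = a) > 0 ∧
        Pr p (fun ω => X ω = x ∧ Z ω = j ∧ A ω = a ∧ R ω = 1) > 0)) :
    let δ : 𝕏 → ℝ := fun x =>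
      Pr p (fun ω => Z ω = j ∧ X ω = x) / Pr p (fun ω => X ω = x)
    let π : 𝕏 → ℝ := fun x => cexp p A (fun ω => X ω = x ∧ Z ω = j)
    let ωc : ℝ → 𝕏 → ℝ := fun a x => cexp p R (fun ω => X ω = x ∧ Z ω = j ∧ A ω = a)
    let μ : ℝ → 𝕏 → ℝ := fun a x =>
      cexp p Y (fun ω => X ω = x ∧ R ω = 1 ∧ Z ω = j ∧ A ω = a)
    Ex p (fun ω =>
        μ 1 (X ω) * π (X ω) + μ 0 (X ω) * (1 - π (X ω))
        + (if Z ω = j then 1 else 0) / δ (X ω) *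
            (R ω * A ω / ωc 1 (X ω) * (Y ω - μ 1 (X ω)) + μ 1 (X ω) * (A ω - π (X ω)))
        + (if Z ω = j then 1 else 0) / δ (X ω) *
            (R ω * (1 - A ω) / ωc 0 (X ω) * (Y ω - μ 0 (X ω))
              + μ 0 (X ω) * ((1 - A ω) - (1 - π (X ω)))))
      = ∑ x : 𝕏, Pr p (fun ω => X ω = x) * cexp p Y (fun ω => X ω = x ∧ Z ω = j) := by
  intro δ π ωc μ
  have hsplit : ∀ g : Ω → ℝ, ∑ ω, g ω = ∑ x : 𝕏, ∑ ω, if X ω = x then g ω else 0 := by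
    intro g
    rw [Finset.sum_comm]
    exact Finset.sum_congr rfl fun ω _ => by simp [Finset.sum_ite_eq]
  have key : ∀ x : 𝕏,
      (∑ ω, if X ω = x then p ω *
        (μ 1 (X ω) * π (X ω) + μ 0 (X ω) * (1 - π (X ω))
          + (if Z ω = j then 1 else 0) / δ (X ω) *
              (R ω * A ω / ωc 1 (X ω) * (Y ω - μ 1 (X ω)) + μ 1 (X ω) * (A ω - π (X ω)))
          + (if Z ω = j then 1 else 0) / δ (X ω) *
              (R ω * (1 - A ω) / ωc 0 (X ω) * (Y ω - μ 0 (X ω))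
                + μ 0 (X ω) * ((1 - A ω) - (1 - π (X ω))))) else 0)
      = Pr p (fun ω => X ω = x) * cexp p Y (fun ω => X ω = x ∧ Z ω = j) := by
    intro x
    rcases eq_or_lt_of_le (show (0:ℝ) ≤ Pr p (fun ω => X ω = x) from
        Finset.sum_nonneg fun ω _ => by by_cases h : X ω = x <;> simp [h, hp0 ω]) with hP0 | hP0
    · -- zero-mass fiber
      have hzero : ∀ ω, X ω = x → p ω = 0 := by
        intro ω hx
        have h0 : ∀ i ∈ (univ : Finset Ω), (0:ℝ) ≤ if X i = x then p i else 0 :=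
          fun i _ => by by_cases h : X i = x <;> simp [h, hp0 i]
        have h := (Finset.sum_eq_zero_iff_of_nonneg h0).mp hP0.symm ω (Finset.mem_univ ω)
        simpa [hx] using h
      rw [← hP0, zero_mul]
      refine Finset.sum_eq_zero fun ω _ => ?_
      by_cases hx : X ω = x
      · simp [hx, hzero ω hx]
      · simp [hx]
    · obtain ⟨hPZ, haux⟩ := hpos x hP0
      obtain ⟨hPA1, hPR1⟩ := haux 1 (Or.inr rfl)
      obtain ⟨hPA0, hPR0⟩ := haux 0 (Or.inl rfl)
      have hd : δ x = Pr p (fun ω => Z ω = j ∧ X ω = x) / Pr p (fun ω => X ω = x) := rfl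
      have hpi : π x = Pr p (fun ω => X ω = x ∧ Z ω = j ∧ A ω = 1)
          / Pr p (fun ω => Z ω = j ∧ X ω = x) := by
        show cexp p A _ = _
        unfold cexp
        rw [sum_ind p A hAbin]
        congr 1
        · exact Pr_congr p fun ω => by tauto
        · exact Pr_congr p fun ω => by tauto
      have hw1 : ωc 1 x = Pr p (fun ω => X ω = x ∧ Z ω = j ∧ A ω = 1 ∧ R ω = 1)
          / Pr p (fun ω => X ω = x ∧ Z ω = j ∧ A ω = 1) := by
        show cexp p R _ = _
        unfold cexp
        rw [sum_ind p R hRbin]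
        congr 1
        exact Pr_congr p fun ω => by tauto
      have hw0 : ωc 0 x = Pr p (fun ω => X ω = x ∧ Z ω = j ∧ A ω = 0 ∧ R ω = 1)
          / Pr p (fun ω => X ω = x ∧ Z ω = j ∧ A ω = 0) := by
        show cexp p R _ = _
        unfold cexp
        rw [sum_ind p R hRbin]
        congr 1
        exact Pr_congr p fun ω => by tauto
      have hm1 : μ 1 x = Pr p (fun ω => R ω = 1 ∧ Y ω = 1 ∧ X ω = x ∧ Z ω = j ∧ A ω = 1)
          / Pr p (fun ω => X ω = x ∧ Z ω = j ∧ A ω = 1 ∧ R ω = 1) := by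
        show cexp p Y _ = _
        unfold cexp
        rw [sum_ind p Y hYbin]
        congr 1
        · exact Pr_congr p fun ω => by tauto
        · exact Pr_congr p fun ω => by tauto
      have hm0 : μ 0 x = Pr p (fun ω => R ω = 1 ∧ Y ω = 1 ∧ X ω = x ∧ Z ω = j ∧ A ω = 0)
          / Pr p (fun ω => X ω = x ∧ Z ω = j ∧ A ω = 0 ∧ R ω = 1) := by
        show cexp p Y _ = _
        unfold cexp
        rw [sum_ind p Y hYbin]
        congr 1
        · exact Pr_congr p fun ω => by tauto
        · exact Pr_congr p fun ω => by tauto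
      have hY1 : Pr p (fun ω => Y ω = 1 ∧ X ω = x ∧ Z ω = j ∧ A ω = 1)
          = Pr p (fun ω => R ω = 1 ∧ Y ω = 1 ∧ X ω = x ∧ Z ω = j ∧ A ω = 1)
            * Pr p (fun ω => X ω = x ∧ Z ω = j ∧ A ω = 1)
            / Pr p (fun ω => X ω = x ∧ Z ω = j ∧ A ω = 1 ∧ R ω = 1) := by
        have h := hCI x 1 (Or.inr rfl)
        rw [Pr_congr p (E := fun ω => R ω = 1 ∧ X ω = x ∧ Z ω = j ∧ A ω = 1)
          (F := fun ω => X ω = x ∧ Z ω = j ∧ A ω = 1 ∧ R ω = 1) (fun ω => by tauto)] at h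
        rw [eq_div_iff hPR1.ne']
        linarith [h]
      have hY0 : Pr p (fun ω => Y ω = 1 ∧ X ω = x ∧ Z ω = j ∧ A ω = 0)
          = Pr p (fun ω => R ω = 1 ∧ Y ω = 1 ∧ X ω = x ∧ Z ω = j ∧ A ω = 0)
            * Pr p (fun ω => X ω = x ∧ Z ω = j ∧ A ω = 0)
            / Pr p (fun ω => X ω = x ∧ Z ω = j ∧ A ω = 0 ∧ R ω = 1) := by
        have h := hCI x 0 (Or.inl rfl)
        rw [Pr_congr p (E := fun ω => R ω = 1 ∧ X ω = x ∧ Z ω = j ∧ A ω = 0)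
          (F := fun ω => X ω = x ∧ Z ω = j ∧ A ω = 0 ∧ R ω = 1) (fun ω => by tauto)] at h
        rw [eq_div_iff hPR0.ne']
        linarith [h]
      have hPA : Pr p (fun ω => X ω = x ∧ Z ω = j ∧ A ω = 0)
          + Pr p (fun ω => X ω = x ∧ Z ω = j ∧ A ω = 1)
          = Pr p (fun ω => Z ω = j ∧ X ω = x) := by
        have h : Pr p (fun ω => (Z ω = j ∧ X ω = x) ∧ A ω = 0)
            + Pr p (fun ω => (Z ω = j ∧ X ω = x) ∧ A ω = 1)
            = Pr p (fun ω => Z ω = j ∧ X ω = x) := Pr_split p A hAbin _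
        rw [Pr_congr p (E := fun ω => (Z ω = j ∧ X ω = x) ∧ A ω = 0)
            (F := fun ω => X ω = x ∧ Z ω = j ∧ A ω = 0) (fun ω => by tauto),
          Pr_congr p (E := fun ω => (Z ω = j ∧ X ω = x) ∧ A ω = 1)
            (F := fun ω => X ω = x ∧ Z ω = j ∧ A ω = 1) (fun ω => by tauto)] at h
        exact h
      have hPR : Pr p (fun ω => X ω = x ∧ Z ω = j ∧ A ω = 0 ∧ R ω = 1)
          + Pr p (fun ω => X ω = x ∧ Z ω = j ∧ A ω = 1 ∧ R ω = 1)
          = Pr p (fun ω => X ω = x ∧ Z ω = j ∧ R ω = 1) := by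
        have h : Pr p (fun ω => (X ω = x ∧ Z ω = j ∧ R ω = 1) ∧ A ω = 0)
            + Pr p (fun ω => (X ω = x ∧ Z ω = j ∧ R ω = 1) ∧ A ω = 1)
            = Pr p (fun ω => X ω = x ∧ Z ω = j ∧ R ω = 1) := Pr_split p A hAbin _
        rw [Pr_congr p (E := fun ω => (X ω = x ∧ Z ω = j ∧ R ω = 1) ∧ A ω = 0)
            (F := fun ω => X ω = x ∧ Z ω = j ∧ A ω = 0 ∧ R ω = 1) (fun ω => by tauto),
          Pr_congr p (E := fun ω => (X ω = x ∧ Z ω = j ∧ R ω = 1) ∧ A ω = 1)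
            (F := fun ω => X ω = x ∧ Z ω = j ∧ A ω = 1 ∧ R ω = 1) (fun ω => by tauto)] at h
        exact h
      have hPRY : Pr p (fun ω => R ω = 1 ∧ Y ω = 1 ∧ X ω = x ∧ Z ω = j ∧ A ω = 0)
          + Pr p (fun ω => R ω = 1 ∧ Y ω = 1 ∧ X ω = x ∧ Z ω = j ∧ A ω = 1)
          = Pr p (fun ω => R ω = 1 ∧ Y ω = 1 ∧ X ω = x ∧ Z ω = j) := by
        have h : Pr p (fun ω => (R ω = 1 ∧ Y ω = 1 ∧ X ω = x ∧ Z ω = j) ∧ A ω = 0)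
            + Pr p (fun ω => (R ω = 1 ∧ Y ω = 1 ∧ X ω = x ∧ Z ω = j) ∧ A ω = 1)
            = Pr p (fun ω => R ω = 1 ∧ Y ω = 1 ∧ X ω = x ∧ Z ω = j) := Pr_split p A hAbin _
        rw [Pr_congr p (E := fun ω => (R ω = 1 ∧ Y ω = 1 ∧ X ω = x ∧ Z ω = j) ∧ A ω = 0)
            (F := fun ω => R ω = 1 ∧ Y ω = 1 ∧ X ω = x ∧ Z ω = j ∧ A ω = 0) (fun ω => by tauto),
          Pr_congr p (E := fun ω => (R ω = 1 ∧ Y ω = 1 ∧ X ω = x ∧ Z ω = j) ∧ A ω = 1)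
            (F := fun ω => R ω = 1 ∧ Y ω = 1 ∧ X ω = x ∧ Z ω = j ∧ A ω = 1) (fun ω => by tauto)] at h
        exact h
      have hPY : Pr p (fun ω => Y ω = 1 ∧ X ω = x ∧ Z ω = j ∧ A ω = 0)
          + Pr p (fun ω => Y ω = 1 ∧ X ω = x ∧ Z ω = j ∧ A ω = 1)
          = Pr p (fun ω => (X ω = x ∧ Z ω = j) ∧ Y ω = 1) := by
        have h : Pr p (fun ω => ((X ω = x ∧ Z ω = j) ∧ Y ω = 1) ∧ A ω = 0)
            + Pr p (fun ω => ((X ω = x ∧ Z ω = j) ∧ Y ω = 1) ∧ A ω = 1)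
            = Pr p (fun ω => (X ω = x ∧ Z ω = j) ∧ Y ω = 1) := Pr_split p A hAbin _
        rw [Pr_congr p (E := fun ω => ((X ω = x ∧ Z ω = j) ∧ Y ω = 1) ∧ A ω = 0)
            (F := fun ω => Y ω = 1 ∧ X ω = x ∧ Z ω = j ∧ A ω = 0) (fun ω => by tauto),
          Pr_congr p (E := fun ω => ((X ω = x ∧ Z ω = j) ∧ Y ω = 1) ∧ A ω = 1)
            (F := fun ω => Y ω = 1 ∧ X ω = x ∧ Z ω = j ∧ A ω = 1) (fun ω => by tauto)] at h
        exact h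
      have hcY : cexp p Y (fun ω => X ω = x ∧ Z ω = j)
          = Pr p (fun ω => (X ω = x ∧ Z ω = j) ∧ Y ω = 1)
            / Pr p (fun ω => Z ω = j ∧ X ω = x) := by
        unfold cexp
        rw [sum_ind p Y hYbin]
        congr 1
        exact Pr_congr p fun ω => by tauto
      rw [hcY]
      trans (∑ ω : Ω,
        ((μ 1 x * π x + μ 0 x * (1 - π x)) * (if X ω = x then p ω else 0)
        + (μ 0 x * π x - μ 1 x * π x) / δ x * (if Z ω = j ∧ X ω = x then p ω else 0)
        + (μ 1 x - μ 0 x) / δ x * (if X ω = x ∧ Z ω = j ∧ A ω = 1 then p ω else 0)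
        + (-(μ 0 x / ωc 0 x)) / δ x * (if X ω = x ∧ Z ω = j ∧ R ω = 1 then p ω else 0)
        + (μ 0 x / ωc 0 x - μ 1 x / ωc 1 x) / δ x *
            (if X ω = x ∧ Z ω = j ∧ A ω = 1 ∧ R ω = 1 then p ω else 0)
        + (1 / ωc 0 x) / δ x *
            (if R ω = 1 ∧ Y ω = 1 ∧ X ω = x ∧ Z ω = j then p ω else 0)
        + (1 / ωc 1 x - 1 / ωc 0 x) / δ x *
            (if R ω = 1 ∧ Y ω = 1 ∧ X ω = x ∧ Z ω = j ∧ A ω = 1 then p ω else 0)))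
      · refine Finset.sum_congr rfl fun ω _ => ?_
        by_cases hx : X ω = x
        · by_cases hz : Z ω = j
          · rcases hAbin ω with hA' | hA' <;> rcases hRbin ω with hR' | hR' <;>
              rcases hYbin ω with hY' | hY' <;>
              · simp only [hx, hz, hA', hR', hY']
                norm_num
                ring
          · simp only [hx, hz]
            norm_num [hz]
            ring
        · simp [hx]
      · simp only [Finset.sum_add_distrib, ← Finset.mul_sum]
        simp only [sum_if_eq_Pr p]
        rw [hd, hpi, hw1, hw0, hm1, hm0, ← hPY, hY1, hY0, ← hPA, ← hPR, ← hPRY]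
        have h1 : Pr p (fun ω => X ω = x) ≠ 0 := hP0.ne'
        have h2 : Pr p (fun ω => X ω = x ∧ Z ω = j ∧ A ω = 1) ≠ 0 := hPA1.ne'
        have h3 : Pr p (fun ω => X ω = x ∧ Z ω = j ∧ A ω = 0) ≠ 0 := hPA0.ne'
        have h4 : Pr p (fun ω => X ω = x ∧ Z ω = j ∧ A ω = 1 ∧ R ω = 1) ≠ 0 := hPR1.ne'
        have h5 : Pr p (fun ω => X ω = x ∧ Z ω = j ∧ A ω = 0 ∧ R ω = 1) ≠ 0 := hPR0.ne'
        have h6 : Pr p (fun ω => X ω = x ∧ Z ω = j ∧ A ω = 0)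
            + Pr p (fun ω => X ω = x ∧ Z ω = j ∧ A ω = 1) ≠ 0 := by
          rw [hPA]; exact hPZ.ne'
        set v1 := Pr p (fun ω => X ω = x) with hv1
        set v2 := Pr p (fun ω => X ω = x ∧ Z ω = j ∧ A ω = 1) with hv2
        set v3 := Pr p (fun ω => X ω = x ∧ Z ω = j ∧ A ω = 0) with hv3
        set v4 := Pr p (fun ω => X ω = x ∧ Z ω = j ∧ A ω = 1 ∧ R ω = 1) with hv4
        set v5 := Pr p (fun ω => X ω = x ∧ Z ω = j ∧ A ω = 0 ∧ R ω = 1) with hv5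
        set v6 := Pr p (fun ω => R ω = 1 ∧ Y ω = 1 ∧ X ω = x ∧ Z ω = j ∧ A ω = 1) with hv6
        set v7 := Pr p (fun ω => R ω = 1 ∧ Y ω = 1 ∧ X ω = x ∧ Z ω = j ∧ A ω = 0) with hv7
        clear_value v1 v2 v3 v4 v5 v6 v7
        clear hv1 hv2 hv3 hv4 hv5 hv6 hv7 hd hpi hw1 hw0 hm1 hm0 hY1 hY0 hPA hPR hPRY hPY hcY hP0 hPZ hPA1 hPR1 hPA0 hPR0 haux
        field_simp
        ring
  unfold Ex
  rw [hsplit]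
  exact Finset.sum_congr rfl fun x _ => key x
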